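/- (Correlation decomposition along a tree via Markov chains) Let X_0, X_1, ..., X_m be real- or finite-valued random variables forming a Markov chain (i.e., X_0 → X_1 → ⋯ → X_m, with X_{s} conditionally independent of X_0,...,X_{s-2} given X_{s-1}), and let t^s : range(X_s) → R^{d_s} be statistics with invertible variance matrices Var[t^s(X_s)]. Then Cor[t^0(X_0), t^m(X_m)] = Cor[t^0(X_0), t^1(X_1)] · Cor[t^1(X_1), t^2(X_2)] ⋯ Cor[t^{m-1}(X_{m-1}), t^m(X_m)], provided each conditional expectation E[t^s(X_s) | X_{s-1}] is an affine function of t^{s-1}(X_{s-1}) — in particular this holds when each X_s takes values in a finite set and t^s spans all functions modulo constants. -/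

import Mathlib

open Finset Matrix

noncomputable section

section MarkovChain

variable (m : ℕ) (O : Fin (m + 1) → Type) [∀ s, Fintype (O s)]
  (d : Fin (m + 1) → ℕ) (t : (s : Fin (m + 1)) → O s → Fin (d s) → ℝ)
  (p : ((s : Fin (m + 1)) → O s) → ℝ)

/-- The mean `E[t^s(X_s)]` under the joint distribution `p`. -/
def mcMean (s : Fin (m + 1)) (k : Fin (d s)) : ℝ :=
  ∑ x : (s : Fin (m + 1)) → O s, p x * t s (x s) k

/-- The covariance matrix `Cov[t^s(X_s), t^{s'}(X_{s'})]` under `p`. -/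
def mcCov (s s' : Fin (m + 1)) : Matrix (Fin (d s)) (Fin (d s')) ℝ :=
  Matrix.of fun k l =>
    ∑ x : (s : Fin (m + 1)) → O s,
      p x * (t s (x s) k - mcMean m O d t p s k) * (t s' (x s') l - mcMean m O d t p s' l)

open Classical in
/-- The positive-semidefinite square root of the inverse of a matrix,
i.e. `M^{-1/2}` for a positive-definite `M` (junk value otherwise). -/
def invSqrt {n : ℕ} (M : Matrix (Fin n) (Fin n) ℝ) : Matrix (Fin n) (Fin n) ℝ :=
  if h : (M⁻¹).PosSemidef then
    h.1.eigenvectorUnitary.1 * diagonal ((↑) ∘ (√·) ∘ h.1.eigenvalues) *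
      (star h.1.eigenvectorUnitary : Matrix (Fin n) (Fin n) ℝ)
  else 0

/-- The correlation matrix
`Cor[t^s(X_s), t^{s'}(X_{s'})] = Var[t^s]^{-1/2} Cov[t^s, t^{s'}] Var[t^{s'}]^{-1/2}`. -/
def mcCor (s s' : Fin (m + 1)) : Matrix (Fin (d s)) (Fin (d s')) ℝ :=
  invSqrt (mcCov m O d t p s s) * mcCov m O d t p s s' * invSqrt (mcCov m O d t p s' s')

/-- The ordered product `Cor[t^0,t^1] · Cor[t^1,t^2] ⋯ Cor[t^{s-1},t^s]`. -/
def corChain (s : Fin (m + 1)) : Matrix (Fin (d 0)) (Fin (d s)) ℝ :=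
  Fin.induction (motive := fun s => Matrix (Fin (d 0)) (Fin (d s)) ℝ) 1
    (fun i ih => ih * mcCor m O d t p i.castSucc i.succ) s

/-! ### Auxiliary lemmas -/

omit [∀ s, Fintype (O s)] in
lemma aux_update_apply_ne {j r : Fin (m + 1)} (h : r ≠ j) (x : (r : Fin (m + 1)) → O r)
    (y : O j) : Function.update x j y r = x r :=
  Function.update_of_ne h y x

/-- The fundamental "swap" identity used to integrate out one coordinate. -/
lemma sum_update_swap (j : Fin (m + 1)) (G : ((r : Fin (m + 1)) → O r) → O j → ℝ) :
    ∑ x : (r : Fin (m + 1)) → O r, ∑ y : O j, G (Function.update x j y) y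
      = ∑ x : (r : Fin (m + 1)) → O r, ∑ y : O j, G x (x j) := by
  classical
  have h := Fintype.sum_equiv
    (⟨fun z => (Function.update z.1 j z.2, z.1 j),
      fun z => (Function.update z.1 j z.2, z.1 j),
      fun z => by
        cases z with
        | mk x y => simp [Function.update_idem, Function.update_eq_self],
      fun z => by
        cases z with
        | mk x y => simp [Function.update_idem, Function.update_eq_self]⟩ :
      (((r : Fin (m + 1)) → O r) × O j) ≃ (((r : Fin (m + 1)) → O r) × O j))
    (fun z : ((r : Fin (m + 1)) → O r) × O j => G (Function.update z.1 j z.2) z.2)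
    (fun z : ((r : Fin (m + 1)) → O r) × O j => G z.1 (z.1 j))
    (fun z => by simp)
  rw [Fintype.sum_prod_type, Fintype.sum_prod_type] at h
  exact h

/-- Summing a function of a single coordinate over the whole product space. -/
lemma sum_coord (j : Fin (m + 1)) (hcard : ∀ r : Fin (m + 1), 0 < Fintype.card (O r))
    (g : O j → ℝ) :
    ∑ x : (r : Fin (m + 1)) → O r, g (x j)
      = (∏ r ∈ Finset.univ.erase j, (Fintype.card (O r) : ℝ)) * ∑ a, g a := by
  classical
  have h := sum_update_swap m O j (fun _ y => g y)
  have hL : (∑ x : (r : Fin (m + 1)) → O r, ∑ y : O j, g y)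
      = (Fintype.card ((r : Fin (m + 1)) → O r) : ℝ) * ∑ a, g a := by
    rw [Finset.sum_const, nsmul_eq_mul, Finset.card_univ]
  have hR : (∑ x : (r : Fin (m + 1)) → O r, ∑ _y : O j, g (x j))
      = (Fintype.card (O j) : ℝ) * ∑ x : (r : Fin (m + 1)) → O r, g (x j) := by
    rw [Finset.mul_sum]
    refine Finset.sum_congr rfl fun x _ => ?_
    rw [Finset.sum_const, nsmul_eq_mul, Finset.card_univ]
  rw [hL, hR] at h
  have hPi : (Fintype.card ((r : Fin (m + 1)) → O r) : ℝ)
      = (Fintype.card (O j) : ℝ) * ∏ r ∈ Finset.univ.erase j, (Fintype.card (O r) : ℝ) := by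
    rw [Fintype.card_pi]
    push_cast
    rw [← Finset.mul_prod_erase Finset.univ _ (Finset.mem_univ j)]
  rw [hPi, mul_assoc] at h
  have hne : (Fintype.card (O j) : ℝ) ≠ 0 := Nat.cast_ne_zero.mpr (hcard j).ne'
  exact (mul_left_cancel₀ hne h).symm

/-- Partial product of kernels: the first `k` of them. -/
def mcPre (pi0 : O 0 → ℝ) (K : (s : Fin m) → O s.castSucc → O s.succ → ℝ) (k : ℕ)
    (x : (r : Fin (m + 1)) → O r) : ℝ :=
  pi0 (x 0) * ∏ r ∈ Finset.univ.filter (fun r : Fin m => (r : ℕ) < k),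
    K r (x r.castSucc) (x r.succ)

lemma mcPre_update (pi0 : O 0 → ℝ) (K : (s : Fin m) → O s.castSucc → O s.succ → ℝ) (k : ℕ)
    (x : (r : Fin (m + 1)) → O r) (j : Fin (m + 1)) (y : O j) (hj : k < (j : ℕ)) :
    mcPre m O pi0 K k (Function.update x j y) = mcPre m O pi0 K k x := by
  unfold mcPre
  congr 1
  · congr 1
    exact aux_update_apply_ne m O (by exact Fin.ne_of_val_ne (by simp; omega)) x y
  · refine Finset.prod_congr rfl fun r hr => ?_
    simp only [Finset.mem_filter] at hr
    rw [aux_update_apply_ne m O (Fin.ne_of_val_ne (by simp; omega)) x y,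
      aux_update_apply_ne m O (Fin.ne_of_val_ne (by simp [Fin.val_succ]; omega)) x y]

lemma mcPre_succ (pi0 : O 0 → ℝ) (K : (s : Fin m) → O s.castSucc → O s.succ → ℝ) (κ : Fin m)
    (x : (r : Fin (m + 1)) → O r) :
    mcPre m O pi0 K ((κ : ℕ) + 1) x
      = mcPre m O pi0 K (κ : ℕ) x * K κ (x κ.castSucc) (x κ.succ) := by
  unfold mcPre
  have hset : Finset.univ.filter (fun r : Fin m => (r : ℕ) < (κ : ℕ) + 1)
      = insert κ (Finset.univ.filter (fun r : Fin m => (r : ℕ) < (κ : ℕ))) := by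
    ext r
    simp [Fin.ext_iff]
    omega
  rw [hset, Finset.prod_insert (by simp)]
  ring

lemma mcPre_last (pi0 : O 0 → ℝ) (K : (s : Fin m) → O s.castSucc → O s.succ → ℝ)
    (hp : ∀ x : (s : Fin (m + 1)) → O s,
      p x = pi0 (x 0) * ∏ s : Fin m, K s (x s.castSucc) (x s.succ))
    (x : (r : Fin (m + 1)) → O r) :
    mcPre m O pi0 K m x = p x := by
  unfold mcPre
  rw [hp x]
  congr 1
  apply Finset.prod_congr _ (fun _ _ => rfl)
  rw [Finset.filter_true_of_mem (fun r _ => r.isLt)]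

lemma mcPre_step (pi0 : O 0 → ℝ) (K : (s : Fin m) → O s.castSucc → O s.succ → ℝ)
    (hK1 : ∀ s x, ∑ y : O s.succ, K s x y = 1) (κ : Fin m)
    (U : ((r : Fin (m + 1)) → O r) → ℝ)
    (hU : ∀ x (j : Fin (m + 1)) (y : O j), (κ : ℕ) < (j : ℕ) → U (Function.update x j y) = U x) :
    ∑ x : (r : Fin (m + 1)) → O r, mcPre m O pi0 K (κ : ℕ) x * U x
      = (Fintype.card (O κ.succ) : ℝ)
        * ∑ x : (r : Fin (m + 1)) → O r, mcPre m O pi0 K ((κ : ℕ) + 1) x * U x := by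
  classical
  have hswap := sum_update_swap m O κ.succ
    (fun x y => mcPre m O pi0 K (κ : ℕ) x * (K κ (x κ.castSucc) y * U x))
  have hL : (∑ x : (r : Fin (m + 1)) → O r, ∑ y : O κ.succ,
        mcPre m O pi0 K (κ : ℕ) (Function.update x κ.succ y)
          * (K κ ((Function.update x κ.succ y) κ.castSucc) y * U (Function.update x κ.succ y)))
      = ∑ x : (r : Fin (m + 1)) → O r, mcPre m O pi0 K (κ : ℕ) x * U x := by
    refine Finset.sum_congr rfl fun x _ => ?_
    have h1 : ∀ y : O κ.succ,
        mcPre m O pi0 K (κ : ℕ) (Function.update x κ.succ y)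
          * (K κ ((Function.update x κ.succ y) κ.castSucc) y * U (Function.update x κ.succ y))
        = mcPre m O pi0 K (κ : ℕ) x * U x * K κ (x κ.castSucc) y := by
      intro y
      rw [mcPre_update m O pi0 K _ x κ.succ y (by simp [Fin.val_succ]),
        aux_update_apply_ne m O (Fin.ne_of_val_ne (by simp [Fin.val_succ])) x y,
        hU x κ.succ y (by simp [Fin.val_succ])]
      ring
    rw [Finset.sum_congr rfl (fun y _ => h1 y), ← Finset.mul_sum, hK1 κ (x κ.castSucc), mul_one]
  have hR : (∑ x : (r : Fin (m + 1)) → O r, ∑ _y : O κ.succ,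
        mcPre m O pi0 K (κ : ℕ) x * (K κ (x κ.castSucc) (x κ.succ) * U x))
      = (Fintype.card (O κ.succ) : ℝ)
        * ∑ x : (r : Fin (m + 1)) → O r, mcPre m O pi0 K ((κ : ℕ) + 1) x * U x := by
    rw [Finset.mul_sum]
    refine Finset.sum_congr rfl fun x _ => ?_
    rw [Finset.sum_const, nsmul_eq_mul, Finset.card_univ, mcPre_succ]
    ring
  rw [hL, hR] at hswap
  exact hswap

lemma mcTele (pi0 : O 0 → ℝ) (K : (s : Fin m) → O s.castSucc → O s.succ → ℝ)
    (hK1 : ∀ s x, ∑ y : O s.succ, K s x y = 1)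
    (hp : ∀ x : (s : Fin (m + 1)) → O s,
      p x = pi0 (x 0) * ∏ s : Fin m, K s (x s.castSucc) (x s.succ)) :
    ∀ (n k : ℕ), k + n = m → ∀ (U : ((r : Fin (m + 1)) → O r) → ℝ),
      (∀ x (j : Fin (m + 1)) (y : O j), k < (j : ℕ) → U (Function.update x j y) = U x) →
      ∑ x : (r : Fin (m + 1)) → O r, mcPre m O pi0 K k x * U x
        = (∏ r ∈ Finset.univ.filter (fun r : Fin (m + 1) => k < (r : ℕ)),
            (Fintype.card (O r) : ℝ))
          * ∑ x : (r : Fin (m + 1)) → O r, p x * U x := by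
  intro n
  induction n with
  | zero =>
    intro k hk U _
    have hk' : k = m := by omega
    rw [hk']
    have hempty : Finset.univ.filter (fun r : Fin (m + 1) => m < (r : ℕ)) = ∅ := by
      apply Finset.filter_eq_empty_iff.mpr
      intro r _
      omega
    rw [hempty, Finset.prod_empty, one_mul]
    exact Finset.sum_congr rfl fun x _ => by rw [mcPre_last m O p pi0 K hp]
  | succ n ih =>
    intro k hk U hU
    have hkm : k < m := by omega
    set κ : Fin m := ⟨k, hkm⟩ with hκ
    have hkv : (κ : ℕ) = k := rfl
    rw [← hkv, mcPre_step m O pi0 K hK1 κ U (by rw [hkv]; exact hU)]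
    rw [hkv] at *
    rw [ih (k + 1) (by omega) U (fun x j y hj => hU x j y (by omega))]
    have hset : Finset.univ.filter (fun r : Fin (m + 1) => k < (r : ℕ))
        = insert κ.succ (Finset.univ.filter (fun r : Fin (m + 1) => k + 1 < (r : ℕ))) := by
      ext r
      simp [Fin.ext_iff, Fin.val_succ, hκ]
      omega
    rw [hset, Finset.prod_insert (by simp [Fin.val_succ, hκ])]
    ring

lemma mcNonempty (pi0 : O 0 → ℝ) (K : (s : Fin m) → O s.castSucc → O s.succ → ℝ)
    (hpi1 : ∑ x : O 0, pi0 x = 1) (hK1 : ∀ s x, ∑ y : O s.succ, K s x y = 1) :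
    ∀ r : Fin (m + 1), 0 < Fintype.card (O r) := by
  have key : ∀ n (h : n < m + 1), Nonempty (O ⟨n, h⟩) := by
    intro n
    induction n with
    | zero =>
      intro h
      by_contra hc
      rw [not_nonempty_iff] at hc
      have h0 : (⟨0, h⟩ : Fin (m + 1)) = 0 := rfl
      rw [h0] at hc
      rw [@Finset.univ_eq_empty _ _ hc, Finset.sum_empty] at hpi1
      exact absurd hpi1 (by norm_num)
    | succ n ih =>
      intro h
      have hn : n < m := by omega
      obtain ⟨a⟩ := ih (by omega)
      by_contra hc
      rw [not_nonempty_iff] at hc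
      have hk := hK1 ⟨n, hn⟩ a
      rw [@Finset.univ_eq_empty _ _ hc, Finset.sum_empty] at hk
      exact absurd hk (by norm_num)
  intro r
  have := key r.val r.isLt
  rw [Fin.eta] at this
  exact @Fintype.card_pos _ _ this

lemma mcMass (pi0 : O 0 → ℝ) (K : (s : Fin m) → O s.castSucc → O s.succ → ℝ)
    (hpi1 : ∑ x : O 0, pi0 x = 1) (hK1 : ∀ s x, ∑ y : O s.succ, K s x y = 1)
    (hp : ∀ x : (s : Fin (m + 1)) → O s,
      p x = pi0 (x 0) * ∏ s : Fin m, K s (x s.castSucc) (x s.succ)) :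
    ∑ x : (r : Fin (m + 1)) → O r, p x = 1 := by
  classical
  have hcard := mcNonempty m O pi0 K hpi1 hK1
  have h0 := mcTele m O p pi0 K hK1 hp m 0 (by omega) (fun _ => 1) (by intros; rfl)
  simp only [mul_one] at h0
  have h1 : ∀ x : (r : Fin (m + 1)) → O r, mcPre m O pi0 K 0 x = pi0 (x 0) := by
    intro x
    unfold mcPre
    rw [Finset.filter_eq_empty_iff.mpr (fun r _ => by omega), Finset.prod_empty, mul_one]
  rw [Finset.sum_congr rfl (fun x _ => h1 x)] at h0
  have h2 := sum_coord m O 0 hcard pi0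
  rw [hpi1, mul_one] at h2
  have hset : Finset.univ.filter (fun r : Fin (m + 1) => 0 < (r : ℕ))
      = Finset.univ.erase 0 := by
    ext r
    simp only [Finset.mem_filter, Finset.mem_univ, true_and, Finset.mem_erase, ne_eq, Fin.ext_iff,
      Fin.val_zero, and_true]
    omega
  rw [h2, hset] at h0
  have hpos : (0 : ℝ) < ∏ r ∈ Finset.univ.erase (0 : Fin (m + 1)), (Fintype.card (O r) : ℝ) :=
    Finset.prod_pos fun r _ => by exact_mod_cast hcard r
  have := mul_left_cancel₀ (ne_of_gt hpos) (h0.symm.trans (mul_one _).symm)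
  linarith [this]


/-- The one-step Markov property: conditional expectation of a function of `X_{s+1}`
given the past is obtained by applying the kernel. -/
lemma markov_step (pi0 : O 0 → ℝ) (K : (s : Fin m) → O s.castSucc → O s.succ → ℝ)
    (hpi1 : ∑ x : O 0, pi0 x = 1) (hK1 : ∀ s x, ∑ y : O s.succ, K s x y = 1)
    (hp : ∀ x : (s : Fin (m + 1)) → O s,
      p x = pi0 (x 0) * ∏ s : Fin m, K s (x s.castSucc) (x s.succ))
    (s : Fin m) (W : ((r : Fin (m + 1)) → O r) → ℝ)
    (hW : ∀ x (j : Fin (m + 1)) (y : O j), (s : ℕ) < (j : ℕ) → W (Function.update x j y) = W x)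
    (f : O s.succ → ℝ) :
    ∑ x : (r : Fin (m + 1)) → O r, p x * (W x * f (x s.succ))
      = ∑ x : (r : Fin (m + 1)) → O r, p x * (W x * ∑ y, K s (x s.castSucc) y * f y) := by
  classical
  have hcard := mcNonempty m O pi0 K hpi1 hK1
  have hcs_ne : ∀ j : Fin (m + 1), (s : ℕ) < (j : ℕ) → s.castSucc ≠ j := by
    intro j hj
    exact Fin.ne_of_val_ne (by simp; omega)
  have hsucc_ne : ∀ j : Fin (m + 1), (s : ℕ) + 1 < (j : ℕ) → s.succ ≠ j := by
    intro j hj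
    exact Fin.ne_of_val_ne (by simp [Fin.val_succ]; omega)
  have hKf_update : ∀ (x : (r : Fin (m + 1)) → O r) (y : O s.succ),
      (∑ z, K s ((Function.update x s.succ y) s.castSucc) z * f z)
        = ∑ z, K s (x s.castSucc) z * f z := by
    intro x y
    rw [aux_update_apply_ne m O (hcs_ne s.succ (by simp [Fin.val_succ])) x y]
  -- key identity at the level of partial products
  have key : ∑ x : (r : Fin (m + 1)) → O r,
        mcPre m O pi0 K ((s : ℕ) + 1) x * (W x * f (x s.succ))
      = ∑ x : (r : Fin (m + 1)) → O r,
        mcPre m O pi0 K ((s : ℕ) + 1) x * (W x * ∑ y, K s (x s.castSucc) y * f y) := by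
    have h1 := sum_update_swap m O s.succ
      (fun x y => mcPre m O pi0 K (s : ℕ) x * (K s (x s.castSucc) y * (W x * f y)))
    have h2 := sum_update_swap m O s.succ
      (fun x y => mcPre m O pi0 K (s : ℕ) x
        * (K s (x s.castSucc) y * (W x * ∑ z, K s (x s.castSucc) z * f z)))
    have hL1 : (∑ x : (r : Fin (m + 1)) → O r, ∑ y : O s.succ,
          mcPre m O pi0 K (s : ℕ) (Function.update x s.succ y)
            * (K s ((Function.update x s.succ y) s.castSucc) y
              * (W (Function.update x s.succ y) * f y)))
        = ∑ x : (r : Fin (m + 1)) → O r,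
            mcPre m O pi0 K (s : ℕ) x * (W x * ∑ y, K s (x s.castSucc) y * f y) := by
      refine Finset.sum_congr rfl fun x _ => ?_
      have hterm : ∀ y : O s.succ,
          mcPre m O pi0 K (s : ℕ) (Function.update x s.succ y)
            * (K s ((Function.update x s.succ y) s.castSucc) y
              * (W (Function.update x s.succ y) * f y))
          = mcPre m O pi0 K (s : ℕ) x * W x * (K s (x s.castSucc) y * f y) := by
        intro y
        rw [mcPre_update m O pi0 K _ x s.succ y (by simp [Fin.val_succ]),
          aux_update_apply_ne m O (hcs_ne s.succ (by simp [Fin.val_succ])) x y,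
          hW x s.succ y (by simp [Fin.val_succ])]
        ring
      rw [Finset.sum_congr rfl (fun y _ => hterm y), ← Finset.mul_sum]
      ring
    have hL2 : (∑ x : (r : Fin (m + 1)) → O r, ∑ y : O s.succ,
          mcPre m O pi0 K (s : ℕ) (Function.update x s.succ y)
            * (K s ((Function.update x s.succ y) s.castSucc) y
              * (W (Function.update x s.succ y)
                * ∑ z, K s ((Function.update x s.succ y) s.castSucc) z * f z)))
        = ∑ x : (r : Fin (m + 1)) → O r,
            mcPre m O pi0 K (s : ℕ) x * (W x * ∑ y, K s (x s.castSucc) y * f y) := by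
      refine Finset.sum_congr rfl fun x _ => ?_
      have hterm : ∀ y : O s.succ,
          mcPre m O pi0 K (s : ℕ) (Function.update x s.succ y)
            * (K s ((Function.update x s.succ y) s.castSucc) y
              * (W (Function.update x s.succ y)
                * ∑ z, K s ((Function.update x s.succ y) s.castSucc) z * f z))
          = mcPre m O pi0 K (s : ℕ) x * (W x * ∑ z, K s (x s.castSucc) z * f z)
              * K s (x s.castSucc) y := by
        intro y
        rw [mcPre_update m O pi0 K _ x s.succ y (by simp [Fin.val_succ]),
          aux_update_apply_ne m O (hcs_ne s.succ (by simp [Fin.val_succ])) x y,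
          hW x s.succ y (by simp [Fin.val_succ])]
        ring
      rw [Finset.sum_congr rfl (fun y _ => hterm y), ← Finset.mul_sum,
        hK1 s (x s.castSucc), mul_one]
    have hR1 : (∑ x : (r : Fin (m + 1)) → O r, ∑ _y : O s.succ,
          mcPre m O pi0 K (s : ℕ) x * (K s (x s.castSucc) (x s.succ) * (W x * f (x s.succ))))
        = (Fintype.card (O s.succ) : ℝ) * ∑ x : (r : Fin (m + 1)) → O r,
            mcPre m O pi0 K ((s : ℕ) + 1) x * (W x * f (x s.succ)) := by
      rw [Finset.mul_sum]
      refine Finset.sum_congr rfl fun x _ => ?_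
      rw [Finset.sum_const, nsmul_eq_mul, Finset.card_univ, mcPre_succ]
      ring
    have hR2 : (∑ x : (r : Fin (m + 1)) → O r, ∑ _y : O s.succ,
          mcPre m O pi0 K (s : ℕ) x * (K s (x s.castSucc) (x s.succ)
            * (W x * ∑ z, K s (x s.castSucc) z * f z)))
        = (Fintype.card (O s.succ) : ℝ) * ∑ x : (r : Fin (m + 1)) → O r,
            mcPre m O pi0 K ((s : ℕ) + 1) x * (W x * ∑ z, K s (x s.castSucc) z * f z) := by
      rw [Finset.mul_sum]
      refine Finset.sum_congr rfl fun x _ => ?_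
      rw [Finset.sum_const, nsmul_eq_mul, Finset.card_univ, mcPre_succ]
      ring
    rw [hL1, hR1] at h1
    rw [hL2, hR2] at h2
    have hcpos : (0 : ℝ) < (Fintype.card (O s.succ) : ℝ) := by exact_mod_cast hcard s.succ
    exact mul_left_cancel₀ (ne_of_gt hcpos) (h1.symm.trans h2)
  -- transfer back to `p` via the telescoping lemma
  have h1 := mcTele m O p pi0 K hK1 hp (m - ((s : ℕ) + 1)) ((s : ℕ) + 1)
    (by have := s.isLt; omega) (fun x => W x * f (x s.succ))
    (by
      intro x j y hj
      rw [hW x j y (by omega), aux_update_apply_ne m O (hsucc_ne j hj) x y])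
  have h2 := mcTele m O p pi0 K hK1 hp (m - ((s : ℕ) + 1)) ((s : ℕ) + 1)
    (by have := s.isLt; omega) (fun x => W x * ∑ y, K s (x s.castSucc) y * f y)
    (by
      intro x j y hj
      rw [hW x j y (by omega), aux_update_apply_ne m O (hcs_ne j (by omega)) x y])
  rw [h1, h2] at key
  have hppos : (0 : ℝ) < ∏ r ∈ Finset.univ.filter (fun r : Fin (m + 1) => (s : ℕ) + 1 < (r : ℕ)),
      (Fintype.card (O r) : ℝ) :=
    Finset.prod_pos fun r _ => by exact_mod_cast hcard r
  exact mul_left_cancel₀ (ne_of_gt hppos) key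

/-- Covariance recursion: `Cov[t^r, t^{s+1}] = Cov[t^r, t^s] Aᵀ`. -/
lemma cov_rec (pi0 : O 0 → ℝ) (K : (s : Fin m) → O s.castSucc → O s.succ → ℝ)
    (hpi1 : ∑ x : O 0, pi0 x = 1) (hK1 : ∀ s x, ∑ y : O s.succ, K s x y = 1)
    (hp : ∀ x : (s : Fin (m + 1)) → O s,
      p x = pi0 (x 0) * ∏ s : Fin m, K s (x s.castSucc) (x s.succ))
    (s : Fin m)
    (A : Matrix (Fin (d s.succ)) (Fin (d s.castSucc)) ℝ) (c : Fin (d s.succ) → ℝ)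
    (hA : ∀ (x : O s.castSucc) (k : Fin (d s.succ)),
      ∑ y : O s.succ, K s x y * t s.succ y k
        = (∑ l, A k l * t s.castSucc x l) + c k)
    (r : Fin (m + 1)) (hr : (r : ℕ) ≤ (s : ℕ)) :
    mcCov m O d t p r s.succ = mcCov m O d t p r s.castSucc * Aᵀ := by
  classical
  have hmass := mcMass m O p pi0 K hpi1 hK1 hp
  ext k l
  set W : ((r : Fin (m + 1)) → O r) → ℝ := fun x => t r (x r) k - mcMean m O d t p r k with hWdef
  have hW : ∀ x (j : Fin (m + 1)) (y : O j), (s : ℕ) < (j : ℕ) →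
      W (Function.update x j y) = W x := by
    intro x j y hj
    rw [hWdef]
    simp only
    rw [aux_update_apply_ne m O (Fin.ne_of_val_ne (by omega)) x y]
  -- `W` is centered
  have hc : ∑ x : (r' : Fin (m + 1)) → O r', p x * W x = 0 := by
    have : ∀ x : (r' : Fin (m + 1)) → O r', p x * W x
        = p x * t r (x r) k - mcMean m O d t p r k * p x := by
      intro x
      rw [hWdef]
      ring
    rw [Finset.sum_congr rfl (fun x _ => this x), Finset.sum_sub_distrib, ← Finset.mul_sum,
      hmass, mul_one]
    rw [mcMean]
    ring
  -- auxiliary: recentered covariance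
  have hcov : ∀ l' : Fin (d s.castSucc),
      ∑ x : (r' : Fin (m + 1)) → O r', p x * (W x * t s.castSucc (x s.castSucc) l')
        = mcCov m O d t p r s.castSucc k l' := by
    intro l'
    have : ∀ x : (r' : Fin (m + 1)) → O r',
        p x * (W x * t s.castSucc (x s.castSucc) l')
          = p x * W x * (t s.castSucc (x s.castSucc) l' - mcMean m O d t p s.castSucc l')
            + mcMean m O d t p s.castSucc l' * (p x * W x) := by
      intro x
      ring
    rw [Finset.sum_congr rfl (fun x _ => this x), Finset.sum_add_distrib, ← Finset.mul_sum,
      hc, mul_zero, add_zero]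
    rfl
  -- main computation
  have hmain : mcCov m O d t p r s.succ k l
      = ∑ x : (r' : Fin (m + 1)) → O r', p x * (W x * t s.succ (x s.succ) l) := by
    have : ∀ x : (r' : Fin (m + 1)) → O r',
        p x * (t r (x r) k - mcMean m O d t p r k)
            * (t s.succ (x s.succ) l - mcMean m O d t p s.succ l)
          = p x * (W x * t s.succ (x s.succ) l)
            - mcMean m O d t p s.succ l * (p x * W x) := by
      intro x
      rw [hWdef]
      ring
    show (∑ x : (r' : Fin (m + 1)) → O r', p x * (t r (x r) k - mcMean m O d t p r k)
        * (t s.succ (x s.succ) l - mcMean m O d t p s.succ l)) = _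
    rw [Finset.sum_congr rfl (fun x _ => this x), Finset.sum_sub_distrib, ← Finset.mul_sum,
      hc, mul_zero, sub_zero]
  rw [hmain, markov_step m O p pi0 K hpi1 hK1 hp s W hW (fun y => t s.succ y l)]
  have hstep2 : ∀ x : (r' : Fin (m + 1)) → O r',
      p x * (W x * ∑ y, K s (x s.castSucc) y * t s.succ y l)
        = (∑ l', A l l' * (p x * (W x * t s.castSucc (x s.castSucc) l')))
          + c l * (p x * W x) := by
    intro x
    rw [hA (x s.castSucc) l]
    have expand : p x * (W x * ((∑ l', A l l' * t s.castSucc (x s.castSucc) l') + c l))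
        = (p x * W x) * (∑ l', A l l' * t s.castSucc (x s.castSucc) l')
          + c l * (p x * W x) := by
      ring
    rw [expand, Finset.mul_sum]
    congr 1
    refine Finset.sum_congr rfl fun l' _ => ?_
    ring
  rw [Finset.sum_congr rfl (fun x _ => hstep2 x), Finset.sum_add_distrib, ← Finset.mul_sum,
    hc, mul_zero, add_zero]
  have hswap : (∑ x : (r' : Fin (m + 1)) → O r', ∑ l' : Fin (d s.castSucc),
        A l l' * (p x * (W x * t s.castSucc (x s.castSucc) l')))
      = ∑ l' : Fin (d s.castSucc), ∑ x : (r' : Fin (m + 1)) → O r',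
        A l l' * (p x * (W x * t s.castSucc (x s.castSucc) l')) := by
    exact Finset.sum_comm
  rw [hswap]
  have hterm : ∀ l' : Fin (d s.castSucc),
      (∑ x : (r' : Fin (m + 1)) → O r', A l l' * (p x * (W x * t s.castSucc (x s.castSucc) l')))
        = mcCov m O d t p r s.castSucc k l' * A l l' := by
    intro l'
    rw [← Finset.mul_sum, hcov l']
    ring
  rw [Finset.sum_congr rfl (fun l' _ => hterm l'), Matrix.mul_apply]
  exact Finset.sum_congr rfl fun l' _ => by rw [Matrix.transpose_apply]

/-! ### Matrix square-root lemmas -/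

lemma invSqrt_mul_self {n : ℕ} {M : Matrix (Fin n) (Fin n) ℝ} (hM : M.PosDef) :
    invSqrt M * invSqrt M = M⁻¹ := by
  have h : (M⁻¹).PosSemidef := hM.inv.posSemidef
  rw [invSqrt, dif_pos h]
  conv_rhs => rw [h.1.spectral_theorem, Unitary.conjStarAlgAut_apply]
  have hU : (star h.1.eigenvectorUnitary : Matrix (Fin n) (Fin n) ℝ) * h.1.eigenvectorUnitary.1
      = 1 := by simp
  have hD : diagonal (((↑) ∘ (√·) ∘ h.1.eigenvalues) : Fin n → ℝ)
      * diagonal ((↑) ∘ (√·) ∘ h.1.eigenvalues)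
      = diagonal (RCLike.ofReal ∘ h.1.eigenvalues) := by
    rw [diagonal_mul_diagonal]
    congr 1
    funext i
    simp [Real.mul_self_sqrt (h.eigenvalues_nonneg i)]
  simp only [Matrix.mul_assoc]
  rw [← Matrix.mul_assoc (star _ : Matrix (Fin n) (Fin n) ℝ), hU, Matrix.one_mul,
    ← Matrix.mul_assoc (diagonal _) (diagonal _), hD]

lemma invSqrt_conj {n : ℕ} {M : Matrix (Fin n) (Fin n) ℝ} (hM : M.PosDef) :
    invSqrt M * M * invSqrt M = 1 := by
  have hdet : IsUnit M.det := isUnit_iff_ne_zero.mpr (ne_of_gt hM.det_pos)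
  have hinv : M⁻¹ * M = 1 := nonsing_inv_mul M hdet
  have hinv' : M * M⁻¹ = 1 := mul_nonsing_inv M hdet
  have h1 : invSqrt M * M⁻¹ = M⁻¹ * invSqrt M := by
    rw [← invSqrt_mul_self hM, ← mul_assoc]
  have hcomm : invSqrt M * M = M * invSqrt M := by
    calc invSqrt M * M = 1 * (invSqrt M * M) := (one_mul _).symm
      _ = M * M⁻¹ * (invSqrt M * M) := by rw [hinv']
      _ = M * (M⁻¹ * invSqrt M) * M := by simp only [mul_assoc]
      _ = M * (invSqrt M * M⁻¹) * M := by rw [h1]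
      _ = M * invSqrt M * (M⁻¹ * M) := by simp only [mul_assoc]
      _ = M * invSqrt M := by rw [hinv, mul_one]
  rw [hcomm, mul_assoc, invSqrt_mul_self hM, hinv']

/-- **correlation decomposition along a Markov chain.**
Let `X_0 → X_1 → ⋯ → X_m` be a (finite-valued) Markov chain, i.e. the joint
distribution factorizes as `p(x) = π(x_0) ∏_s K_s(x_{s-1}, x_s)` through an initial
distribution and stochastic kernels.  Assume the variance matrices `Var[t^s(X_s)]` are
positive definite and each conditional expectation `E[t^s(X_s) | X_{s-1}]` is an affine
function of `t^{s-1}(X_{s-1})`.  Then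
`Cor[t^0(X_0), t^m(X_m)] = Cor[t^0,t^1] · Cor[t^1,t^2] ⋯ Cor[t^{m-1},t^m]`. -/
theorem markov_correlation_decomposition
    (pi0 : O 0 → ℝ)
    (K : (s : Fin m) → O s.castSucc → O s.succ → ℝ)
    (hpi0 : ∀ x, 0 ≤ pi0 x) (hpi1 : ∑ x : O 0, pi0 x = 1)
    (hK : ∀ s x y, 0 ≤ K s x y) (hK1 : ∀ s x, ∑ y : O s.succ, K s x y = 1)
    (hp : ∀ x : (s : Fin (m + 1)) → O s,
      p x = pi0 (x 0) * ∏ s : Fin m, K s (x s.castSucc) (x s.succ))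
    (hpd : ∀ s : Fin (m + 1), (mcCov m O d t p s s).PosDef)
    (haffine : ∀ s : Fin m,
      ∃ (A : Matrix (Fin (d s.succ)) (Fin (d s.castSucc)) ℝ) (c : Fin (d s.succ) → ℝ),
        ∀ (x : O s.castSucc) (k : Fin (d s.succ)),
          ∑ y : O s.succ, K s x y * t s.succ y k
            = (∑ l, A k l * t s.castSucc x l) + c k) :
    mcCor m O d t p 0 (Fin.last m) = corChain m O d t p (Fin.last m) := by
  classical
  suffices h : ∀ s : Fin (m + 1), mcCor m O d t p 0 s = corChain m O d t p s from h _
  intro s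
  induction s using Fin.induction with
  | zero =>
    have hz : corChain m O d t p 0 = 1 := by
      simp only [corChain, Fin.induction_zero]
    rw [hz, mcCor]
    exact invSqrt_conj (hpd 0)
  | succ i ih =>
    obtain ⟨A, c, hA⟩ := haffine i
    have h1 : mcCov m O d t p 0 i.succ = mcCov m O d t p 0 i.castSucc * Aᵀ :=
      cov_rec m O d t p pi0 K hpi1 hK1 hp i A c hA 0 (by simp)
    have h2 : mcCov m O d t p i.castSucc i.succ
        = mcCov m O d t p i.castSucc i.castSucc * Aᵀ :=
      cov_rec m O d t p pi0 K hpi1 hK1 hp i A c hA i.castSucc (by simp)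
    have hdet : IsUnit (mcCov m O d t p i.castSucc i.castSucc).det :=
      isUnit_iff_ne_zero.mpr (ne_of_gt (hpd i.castSucc).det_pos)
    have hVinv : (mcCov m O d t p i.castSucc i.castSucc)⁻¹
        * mcCov m O d t p i.castSucc i.castSucc = 1 := nonsing_inv_mul _ hdet
    have haux : (mcCov m O d t p i.castSucc i.castSucc)⁻¹
        * (mcCov m O d t p i.castSucc i.castSucc * Aᵀ) = Aᵀ := by
      rw [← Matrix.mul_assoc, hVinv, Matrix.one_mul]
    have h3 : mcCov m O d t p 0 i.succ
        = mcCov m O d t p 0 i.castSucc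
          * ((mcCov m O d t p i.castSucc i.castSucc)⁻¹
            * mcCov m O d t p i.castSucc i.succ) := by
      rw [h2, haux, h1]
    have hchain : corChain m O d t p i.succ
        = corChain m O d t p i.castSucc * mcCor m O d t p i.castSucc i.succ := by
      rw [corChain, corChain, Fin.induction_succ]
    rw [hchain, ← ih]
    rw [mcCor, mcCor, mcCor, h3, ← invSqrt_mul_self (hpd i.castSucc)]
    simp only [Matrix.mul_assoc]

end MarkovChain
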